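/- Let U ⊆ ℂ^n be a connected open set and let φ_1, …, φ_d be holomorphic functions on U that are algebraically independent over the field of rational functions. Let W ⊆ ℂ^n × ℂ^d be a connected open set containing the graph {(s, φ_1(s), …, φ_d(s)) : s ∈ U}, and let Ψ be a Nash algebraic holomorphic function on W. If Ψ(s, φ_1(s), …, φ_d(s)) = 0 for all s ∈ U, then Ψ is identically zero on W. (This is the key vanishing lemma in the proof of Theorem 2.1(ii)–(iii): a Nash algebraic function vanishing along the graph of algebraically independent functions vanishes identically.) -/
import Mathlib

noncomputable section NashAuxSection

open Polynomial

namespace NashAux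

variable {σ : Type*}

/-- Regard a polynomial in variables `σ ⊕ Unit` as a polynomial in the `Unit` variable
with coefficients that are multivariate polynomials in the `σ` variables. -/
def toPoly : MvPolynomial (σ ⊕ Unit) ℂ →+* Polynomial (MvPolynomial σ ℂ) :=
  (MvPolynomial.aeval (Sum.elim (fun i => Polynomial.C (MvPolynomial.X i))
    (fun _ => (Polynomial.X : Polynomial (MvPolynomial σ ℂ))))).toRingHom

def fromPoly : Polynomial (MvPolynomial σ ℂ) →+* MvPolynomial (σ ⊕ Unit) ℂ :=
  Polynomial.eval₂RingHom
    (MvPolynomial.rename (Sum.inl : σ → σ ⊕ Unit)).toRingHom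
    (MvPolynomial.X (Sum.inr ()))

lemma fromPoly_toPoly (P : MvPolynomial (σ ⊕ Unit) ℂ) : fromPoly (toPoly P) = P := by
  have h : (fromPoly.comp (toPoly (σ := σ))) = RingHom.id _ := by
    apply MvPolynomial.ringHom_ext
    · intro a; simp [toPoly, fromPoly]
    · rintro (i | u)
      · simp [toPoly, fromPoly]
      · simp [toPoly, fromPoly]
  simpa using RingHom.congr_fun h P

lemma toPoly_ne_zero {P : MvPolynomial (σ ⊕ Unit) ℂ} (hP : P ≠ 0) : toPoly P ≠ 0 := by
  intro h
  apply hP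
  rw [← fromPoly_toPoly P, h, map_zero]

lemma eval_toPoly (P : MvPolynomial (σ ⊕ Unit) ℂ) (v : σ → ℂ) (y : ℂ) :
    Polynomial.eval y ((toPoly P).map (MvPolynomial.eval v)) =
      MvPolynomial.eval (Sum.elim v fun _ => y) P := by
  have h : ((Polynomial.evalRingHom y).comp
      ((Polynomial.mapRingHom (MvPolynomial.eval v)).comp (toPoly (σ := σ))))
      = (MvPolynomial.eval (Sum.elim v fun _ => y) : MvPolynomial (σ ⊕ Unit) ℂ →+* ℂ) := by
    apply MvPolynomial.ringHom_ext
    · intro a; simp [toPoly]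
    · rintro (i | u) <;> simp [toPoly]
  exact RingHom.congr_fun h P

/-- Propagation of vanishing of a holomorphic function from a small ball to a large ball,
via one-dimensional slices. -/
lemma ball_propagation {E : Type*} [NormedAddCommGroup E] [NormedSpace ℂ E]
    {W : Set E} {f : E → ℂ} (hf : DifferentiableOn ℂ f W) {y : E} {ε ρ : ℝ}
    (hε : 0 < ε) (hW : Metric.ball y ρ ⊆ W) (hz : ∀ x ∈ Metric.ball y ε, f x = 0) :
    ∀ x ∈ Metric.ball y ρ, f x = 0 := by
  intro z hzρ
  have hρ : 0 < ρ := lt_of_le_of_lt dist_nonneg (Metric.mem_ball.1 hzρ)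
  rcases eq_or_ne z y with rfl | hne
  · exact hz z (Metric.mem_ball_self hε)
  have hc : 0 < ‖z - y‖ := by
    rw [norm_pos_iff]; exact sub_ne_zero_of_ne hne
  set c : ℝ := ‖z - y‖ with hcdef
  set L : ℂ → E := fun t => y + t • (z - y) with hLdef
  have hLmem : ∀ t : ℂ, ‖t‖ * c < ρ → L t ∈ Metric.ball y ρ := by
    intro t ht
    rw [Metric.mem_ball, dist_eq_norm]
    simpa [L, norm_smul] using ht
  set D : Set ℂ := Metric.ball (0 : ℂ) (ρ / c) with hDdef
  have hLD : ∀ t ∈ D, L t ∈ Metric.ball y ρ := by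
    intro t ht
    apply hLmem
    have : ‖t‖ < ρ / c := by rwa [hDdef, mem_ball_zero_iff] at ht
    calc ‖t‖ * c < (ρ / c) * c := by exact mul_lt_mul_of_pos_right this hc
    _ = ρ := div_mul_cancel₀ _ (ne_of_gt hc)
  have hLdiff : Differentiable ℂ L := by
    exact (differentiable_id.smul_const (z - y)).const_add y
  have hgd : DifferentiableOn ℂ (f ∘ L) D :=
    hf.comp hLdiff.differentiableOn (fun t ht => hW (hLD t ht))
  have hga : AnalyticOnNhd ℂ (f ∘ L) D := hgd.analyticOnNhd Metric.isOpen_ball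
  have h0D : (0 : ℂ) ∈ D := Metric.mem_ball_self (div_pos hρ hc)
  have hev : (f ∘ L) =ᶠ[nhds (0 : ℂ)] 0 := by
    have hball : Metric.ball (0 : ℂ) (ε / c) ∈ nhds (0 : ℂ) :=
      Metric.ball_mem_nhds _ (div_pos hε hc)
    filter_upwards [hball] with t ht
    have : ‖t‖ * c < ε := by
      have h1 : ‖t‖ < ε / c := by rwa [mem_ball_zero_iff] at ht
      calc ‖t‖ * c < (ε / c) * c := mul_lt_mul_of_pos_right h1 hc
      _ = ε := div_mul_cancel₀ _ (ne_of_gt hc)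
    have hmem : L t ∈ Metric.ball y ε := by
      rw [Metric.mem_ball, dist_eq_norm]
      simpa [L, norm_smul] using this
    simpa using hz _ hmem
  have heq : Set.EqOn (f ∘ L) 0 D :=
    hga.eqOn_zero_of_preconnected_of_eventuallyEq_zero
      (convex_ball (0 : ℂ) (ρ / c)).isPreconnected h0D hev
  have h1D : (1 : ℂ) ∈ D := by
    rw [hDdef, mem_ball_zero_iff]
    have hcρ : c < ρ := by
      have := Metric.mem_ball.1 hzρ
      rwa [dist_eq_norm] at this
    simpa using (one_lt_div hc).2 hcρ
  have := heq h1D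
  simpa [L] using this

/-- Identity theorem for holomorphic functions of several variables, proved by slicing. -/
lemma eqOn_zero_of_eventuallyEq_zero {E : Type*} [NormedAddCommGroup E] [NormedSpace ℂ E]
    {W : Set E} (hWo : IsOpen W) (hWc : IsPreconnected W) {f : E → ℂ}
    (hf : DifferentiableOn ℂ f W) {x₀ : E} (hx₀ : x₀ ∈ W)
    (h0 : ∀ᶠ y in nhds x₀, f y = 0) :
    ∀ x ∈ W, f x = 0 := by
  set u : Set E := {x | ∀ᶠ y in nhds x, f y = 0} with hudef
  have hu_open : IsOpen u := isOpen_setOf_eventually_nhds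
  have hA : ∀ x ∈ W, x ∈ closure u → x ∈ u := by
    intro x hxW hxc
    obtain ⟨ρ, hρ, hball⟩ := Metric.isOpen_iff.1 hWo x hxW
    obtain ⟨y, hy_ball, hy_u⟩ :=
      (mem_closure_iff.1 hxc) (Metric.ball x (ρ / 2)) Metric.isOpen_ball
        (Metric.mem_ball_self (half_pos hρ))
    obtain ⟨ε, hε, hεz⟩ := Metric.eventually_nhds_iff.1 hy_u
    have hby : Metric.ball y (ρ / 2) ⊆ W := by
      intro w hw
      apply hball
      rw [Metric.mem_ball] at *
      calc dist w x ≤ dist w y + dist y x := dist_triangle _ _ _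
        _ < ρ / 2 + ρ / 2 := add_lt_add hw hy_ball
        _ = ρ := add_halves ρ
    have hzero : ∀ w ∈ Metric.ball y (ρ / 2), f w = 0 :=
      ball_propagation hf hε hby (fun w hw => hεz (Metric.mem_ball.1 hw))
    have hx_mem : x ∈ Metric.ball y (ρ / 2) := by
      rw [Metric.mem_ball, dist_comm]
      exact Metric.mem_ball.1 hy_ball
    exact Filter.eventually_of_mem (Metric.isOpen_ball.mem_nhds hx_mem) hzero
  rcases (W ∩ (closure u)ᶜ).eq_empty_or_nonempty with hempty | hne
  · intro x hxW
    have hxcl : x ∈ closure u := by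
      by_contra hc
      exact (Set.eq_empty_iff_forall_notMem.1 hempty x) ⟨hxW, hc⟩
    exact (hA x hxW hxcl).self_of_nhds
  · exfalso
    obtain ⟨p, hpW, hpu, hpv⟩ := hWc u (closure u)ᶜ hu_open isClosed_closure.isOpen_compl
      (by
        intro x hxW
        by_cases hc : x ∈ closure u
        · exact Or.inl (hA x hxW hc)
        · exact Or.inr hc)
      ⟨x₀, hx₀, h0⟩ hne
    exact hpv (subset_closure hpu)

end NashAux

end NashAuxSection


/-- A holomorphic function `f` on an open subset `V ⊆ ℂ^a × ℂ^b` is *Nash algebraic* if there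
is a nonzero polynomial `P` in the variables `(z₁, …, z_a, w₁, …, w_b, y)` with complex
coefficients such that `P(z, w, f (z, w)) = 0` for all `(z, w) ∈ V`. -/
def NashAlgebraicOnPair {a b : ℕ} (f : ((Fin a → ℂ) × (Fin b → ℂ)) → ℂ)
    (V : Set ((Fin a → ℂ) × (Fin b → ℂ))) : Prop :=
  ∃ P : MvPolynomial ((Fin a ⊕ Fin b) ⊕ Unit) ℂ, P ≠ 0 ∧
    ∀ zw ∈ V, MvPolynomial.eval (Sum.elim (Sum.elim zw.1 zw.2) fun _ => f zw) P = 0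

/-- Key vanishing lemma in the proof of Theorem 2.1(ii)–(iii): if `φ₁, …, φ_d` are holomorphic
functions on a connected open set `U ⊆ ℂ^n`, algebraically independent over the rational
functions, and `Ψ` is a Nash algebraic holomorphic function on a connected open set
`W ⊆ ℂ^n × ℂ^d` containing the graph `{(s, φ(s)) : s ∈ U}` which vanishes along this graph,
then `Ψ ≡ 0` on `W`. -/
theorem nashAlgebraic_vanishing_on_graph
    {n d : ℕ} (U : Set (Fin n → ℂ)) (hUo : IsOpen U) (hUc : IsConnected U)
    (φ : Fin d → (Fin n → ℂ) → ℂ) (hφ : ∀ i, DifferentiableOn ℂ (φ i) U)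
    (hindep : ∀ A : MvPolynomial (Fin n ⊕ Fin d) ℂ, A ≠ 0 →
      ¬ ∀ s ∈ U, MvPolynomial.eval (Sum.elim s fun i => φ i s) A = 0)
    (W : Set ((Fin n → ℂ) × (Fin d → ℂ))) (hWo : IsOpen W) (hWc : IsConnected W)
    (hgraph : ∀ s ∈ U, (s, fun i => φ i s) ∈ W)
    (Ψ : ((Fin n → ℂ) × (Fin d → ℂ)) → ℂ)
    (hΨ : DifferentiableOn ℂ Ψ W) (hΨn : NashAlgebraicOnPair Ψ W)
    (hvan : ∀ s ∈ U, Ψ (s, fun i => φ i s) = 0) :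
    ∀ zw ∈ W, Ψ zw = 0 := by
  classical
  obtain ⟨P, hP0, hPeval⟩ := hΨn
  set Q : Polynomial (MvPolynomial (Fin n ⊕ Fin d) ℂ) := NashAux.toPoly P with hQdef
  have hQ0 : Q ≠ 0 := NashAux.toPoly_ne_zero hP0
  have hQeval : ∀ zw ∈ W,
      Polynomial.eval (Ψ zw) (Q.map (MvPolynomial.eval (Sum.elim zw.1 zw.2))) = 0 := by
    intro zw hzw
    rw [hQdef, NashAux.eval_toPoly]
    exact hPeval zw hzw
  obtain ⟨R, hQR, hndvd⟩ := Q.exists_eq_pow_rootMultiplicity_mul_and_not_dvd hQ0 0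
  set m := Q.rootMultiplicity 0 with hmdef
  rw [Polynomial.C_0, sub_zero] at hQR hndvd
  have hc0 : R.coeff 0 ≠ 0 := fun h => hndvd (Polynomial.X_dvd_iff.2 h)
  set g : ((Fin n → ℂ) × (Fin d → ℂ)) → ℂ := fun zw =>
    Polynomial.eval (Ψ zw) (R.map (MvPolynomial.eval (Sum.elim zw.1 zw.2))) with hgdef
  have hfact : ∀ zw ∈ W, Ψ zw ^ m * g zw = 0 := by
    intro zw hzw
    have h := hQeval zw hzw
    rw [hQR] at h
    simpa [g, Polynomial.eval_mul, Polynomial.eval_pow] using h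
  obtain ⟨s₀, hs₀U, hs₀⟩ : ∃ s ∈ U,
      MvPolynomial.eval (Sum.elim s fun i => φ i s) (R.coeff 0) ≠ 0 := by
    by_contra h
    push_neg at h
    exact hindep _ hc0 h
  set x₀ : ((Fin n → ℂ) × (Fin d → ℂ)) := (s₀, fun i => φ i s₀) with hx₀def
  have hx₀W : x₀ ∈ W := hgraph s₀ hs₀U
  have hΨx₀ : Ψ x₀ = 0 := hvan s₀ hs₀U
  have hgx₀ : g x₀ ≠ 0 := by
    have : g x₀ = MvPolynomial.eval (Sum.elim s₀ fun i => φ i s₀) (R.coeff 0) := by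
      simp only [hgdef, hΨx₀]
      rw [← Polynomial.coeff_zero_eq_eval_zero, Polynomial.coeff_map]
    rw [this]
    exact hs₀
  have hm : m ≠ 0 := by
    intro h
    apply hgx₀
    have := hfact x₀ hx₀W
    rwa [h, pow_zero, one_mul] at this
  have hgcont : ContinuousAt g x₀ := by
    have hΨc : ContinuousAt Ψ x₀ := hΨ.continuousOn.continuousAt (hWo.mem_nhds hx₀W)
    have hrepr : ∀ zw, g zw = ∑ j ∈ Finset.range (R.natDegree + 1),
        MvPolynomial.eval (Sum.elim zw.1 zw.2) (R.coeff j) * Ψ zw ^ j := by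
      intro zw
      simp only [hgdef]
      rw [Polynomial.eval_eq_sum_range'
        (Nat.lt_succ_of_le Polynomial.natDegree_map_le)]
      simp [Polynomial.coeff_map]
    have hsum : ContinuousAt (fun zw => ∑ j ∈ Finset.range (R.natDegree + 1),
        MvPolynomial.eval (Sum.elim zw.1 zw.2) (R.coeff j) * Ψ zw ^ j) x₀ := by
      apply tendsto_finset_sum
      intro j _
      apply ContinuousAt.mul
      · have hcont : Continuous fun zw : ((Fin n → ℂ) × (Fin d → ℂ)) =>
            MvPolynomial.eval (Sum.elim zw.1 zw.2) (R.coeff j) := by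
          apply (MvPolynomial.continuous_eval (R.coeff j)).comp
          apply continuous_pi
          rintro (i | i)
          · exact (continuous_apply i).comp continuous_fst
          · exact (continuous_apply i).comp continuous_snd
        exact hcont.continuousAt
      · exact hΨc.pow j
    exact hsum.congr (Filter.Eventually.of_forall fun zw => (hrepr zw).symm)
  have hne : ∀ᶠ zw in nhds x₀, g zw ≠ 0 := hgcont.eventually_ne hgx₀
  have hΨ0 : ∀ᶠ zw in nhds x₀, Ψ zw = 0 := by
    filter_upwards [hne, hWo.mem_nhds hx₀W] with zw h1 h2
    have h := hfact zw h2
    rcases mul_eq_zero.1 h with h' | h'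
    · exact pow_eq_zero_iff hm |>.1 h'
    · exact absurd h' h1
  exact NashAux.eqOn_zero_of_eventuallyEq_zero hWo hWc.isPreconnected hΨ hx₀W hΨ0
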